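/- arXiv:2101.08173 — 3 statements merged into one kernel-verified Lean document; each statement's English description precedes it below -/
import Mathlib

section
/- If a real polynomial P(x) = \sum_{i=0}^n b_i x^i has all coefficients b_i > 0 and satisfies b_i^2 > 4 b_{i-1} b_{i+1} for all 1 \le i \le n-1, then all roots of P are real and distinct. -/
open Finset Polynomial

/-- Bounds for alternating sums of a nonincreasing nonnegative sequence. -/
private lemma alt_sum_bounds : ∀ (m : ℕ) (a : ℕ → ℝ),
    (∀ i, i + 1 < m → a (i + 1) ≤ a i) → (∀ i, i < m → 0 ≤ a i) →
    0 ≤ (∑ i ∈ Finset.range m, (-1 : ℝ) ^ i * a i) ∧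
      (∑ i ∈ Finset.range m, (-1 : ℝ) ^ i * a i) ≤ (if m = 0 then 0 else a 0) := by
  intro m
  induction m with
  | zero => intro a _ _; simp
  | succ m ih =>
    intro a hmono hnn
    have key : (∑ i ∈ Finset.range (m + 1), (-1 : ℝ) ^ i * a i)
        = a 0 - ∑ i ∈ Finset.range m, (-1 : ℝ) ^ i * a (i + 1) := by
      rw [Finset.sum_range_succ']
      have h1 : ∀ i ∈ Finset.range m,
          (-1 : ℝ) ^ (i + 1) * a (i + 1) = -((-1 : ℝ) ^ i * a (i + 1)) := by
        intro i _; rw [pow_succ]; ring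
      rw [Finset.sum_congr rfl h1, Finset.sum_neg_distrib]
      simp; ring
    obtain ⟨h1, h2⟩ := ih (fun i => a (i + 1)) (fun i hi => hmono (i + 1) (by omega))
      (fun i hi => hnn (i + 1) (by omega))
    constructor
    · rw [key]
      rcases Nat.eq_zero_or_pos m with hm | hm
      · subst hm; simp at h2 ⊢; have := hnn 0 (by omega); linarith
      · have hb : (if m = 0 then (0:ℝ) else a 1) = a 1 := by
          rw [if_neg (by omega)]
        rw [hb] at h2
        have := hmono 0 (by omega)
        simp at this
        linarith
    · rw [key, if_neg (by omega)]
      linarith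

/-- The key sign computation in Kurtz's theorem: at the point
`-(2 * b (k-1) / b k)` the polynomial has sign `(-1)^k`. -/
private lemma kurtz_sign (n : ℕ) (b : ℕ → ℝ) (hpos : ∀ i ≤ n, 0 < b i)
    (hstep : ∀ i, 1 ≤ i → i < n → 4 * (b (i - 1) / b i) < b i / b (i + 1))
    (k : ℕ) (hk1 : 1 ≤ k) (hkn : k ≤ n) :
    0 < (-1 : ℝ) ^ k * ∑ i ∈ Finset.range (n + 1),
        b i * (-(2 * (b (k - 1) / b k))) ^ i := by
  have hbk : 0 < b k := hpos k hkn
  have hbk1 : 0 < b (k - 1) := hpos _ (le_trans (Nat.sub_le k 1) hkn)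
  set c : ℝ := 2 * (b (k - 1) / b k) with hc_def
  have hc : 0 < c := by positivity
  set t : ℕ → ℝ := fun i => b i * c ^ i with ht_def
  have htpos : ∀ i ≤ n, 0 < t i := fun i hi => mul_pos (hpos i hi) (pow_pos hc i)
  -- ratio monotonicity
  have rmono : ∀ j, 1 ≤ j → j ≤ n → ∀ i, 1 ≤ i → i ≤ j →
      b (i - 1) / b i ≤ b (j - 1) / b j := by
    intro j
    induction j with
    | zero => omega
    | succ j ih =>
      intro _ hjn i hi1 hij
      rcases Nat.eq_or_lt_of_le hij with h | h
      · rw [h]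
      · have hj1 : 1 ≤ j := by omega
        have h1 := ih hj1 (by omega) i hi1 (by omega)
        have h2 := hstep j hj1 (by omega)
        have h3 : 0 < b (j - 1) / b j :=
          div_pos (hpos _ (by omega)) (hpos _ (by omega))
        have h4 : b (j - 1) / b j < b ((j + 1) - 1) / b (j + 1) := by
          simp only [Nat.add_sub_cancel]
          linarith
        linarith
  have rjump : ∀ j, k < j → j ≤ n → 4 * (b (k - 1) / b k) ≤ b (j - 1) / b j := by
    intro j hkj hjn
    have h1 : 4 * (b (k - 1) / b k) < b k / b (k + 1) := hstep k hk1 (by omega)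
    have h2 : b ((k + 1) - 1) / b (k + 1) ≤ b (j - 1) / b j :=
      rmono j (by omega) hjn (k + 1) (by omega) hkj
    simp only [Nat.add_sub_cancel] at h2
    linarith
  -- t is increasing below k
  have hlow : ∀ i, i + 1 ≤ k → t i ≤ t (i + 1) := by
    intro i hik
    have hbi : 0 < b i := hpos i (by omega)
    have hbi1 : 0 < b (i + 1) := hpos _ (by omega)
    have hri : b ((i + 1) - 1) / b (i + 1) ≤ b (k - 1) / b k :=
      rmono k hk1 hkn (i + 1) (by omega) hik
    simp only [Nat.add_sub_cancel] at hri
    have h2 : b i ≤ b (i + 1) * c := by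
      rw [hc_def]
      rw [div_le_iff₀ hbi1] at hri
      have hr0 : 0 ≤ b (k - 1) / b k := le_of_lt (div_pos hbk1 hbk)
      nlinarith
    calc b i * c ^ i ≤ (b (i + 1) * c) * c ^ i :=
          mul_le_mul_of_nonneg_right h2 (le_of_lt (pow_pos hc i))
      _ = b (i + 1) * c ^ (i + 1) := by rw [pow_succ]; ring
  -- t is decreasing above k
  have hup : ∀ i, k ≤ i → i < n → t (i + 1) ≤ t i := by
    intro i hki hin
    have hbi : 0 < b i := hpos i (by omega)
    have hbi1 : 0 < b (i + 1) := hpos _ (by omega)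
    have hri : 4 * (b (k - 1) / b k) ≤ b ((i + 1) - 1) / b (i + 1) :=
      rjump (i + 1) (by omega) (by omega)
    simp only [Nat.add_sub_cancel] at hri
    have h2 : b (i + 1) * c ≤ b i := by
      rw [hc_def]
      rw [le_div_iff₀ hbi1] at hri
      have hr0 : 0 ≤ b (k - 1) / b k := le_of_lt (div_pos hbk1 hbk)
      nlinarith
    calc b (i + 1) * c ^ (i + 1) = (b (i + 1) * c) * c ^ i := by rw [pow_succ]; ring
      _ ≤ b i * c ^ i := mul_le_mul_of_nonneg_right h2 (le_of_lt (pow_pos hc i))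
  -- t (k-1) = t k / 2
  have heq : t (k - 1) = t k / 2 := by
    have hk' : k = (k - 1) + 1 := by omega
    have hpow : c ^ k = c ^ (k - 1) * c := by
      conv_lhs => rw [hk']
      rw [pow_succ]
    have hbc : b k * c = 2 * b (k - 1) := by
      rw [hc_def]; field_simp
    simp only [ht_def]
    rw [hpow]
    linear_combination (-(c ^ (k - 1)) / 2) * hbc
  -- t (k+1) < t k / 2 (when k < n)
  have hstrict : k < n → t (k + 1) < t k / 2 := by
    intro hkn'
    have hbk1' : 0 < b (k + 1) := hpos _ (by omega)
    have h := hstep k hk1 hkn'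
    rw [← mul_div_assoc, div_lt_div_iff₀ hbk hbk1'] at h
    -- h : 4 * b (k-1) * b (k+1) < b k * b k
    have h5 : b (k + 1) * c < b k / 2 := by
      rw [hc_def]
      rw [lt_div_iff₀ (by norm_num : (0:ℝ) < 2)]
      have hexp : b (k + 1) * (2 * (b (k - 1) / b k)) * 2 * b k
          = 4 * b (k - 1) * b (k + 1) := by field_simp; ring
      nlinarith [hexp, h, hbk]
    calc t (k + 1) = (b (k + 1) * c) * c ^ k := by rw [ht_def]; simp only; rw [pow_succ]; ring
      _ < (b k / 2) * c ^ k := mul_lt_mul_of_pos_right h5 (pow_pos hc k)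
      _ = t k / 2 := by rw [ht_def]; simp only; ring
  -- split the sum
  clear_value t c
  have hsq : ∀ m : ℕ, ((-1 : ℝ) ^ m) * ((-1 : ℝ) ^ m) = 1 := by
    intro m
    rw [← pow_add, ← two_mul, pow_mul]
    norm_num
  have hsplit : (-1 : ℝ) ^ k * (∑ i ∈ Finset.range (n + 1), b i * (-c) ^ i)
      = ((∑ j ∈ Finset.range (n + 1 - k), (-1 : ℝ) ^ j * t (k + j))
        - ∑ j ∈ Finset.range k, (-1 : ℝ) ^ j * t (k - 1 - j)) := by
    have hnk : n + 1 = k + (n + 1 - k) := by omega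
    rw [Finset.mul_sum]
    rw [show (∑ i ∈ Finset.range (n + 1), (-1 : ℝ) ^ k * (b i * (-c) ^ i))
        = ∑ i ∈ Finset.range (k + (n + 1 - k)), (-1 : ℝ) ^ k * (b i * (-c) ^ i) by
      rw [← hnk]]
    rw [Finset.sum_range_add]
    have hB : ∀ j, (-1 : ℝ) ^ k * (b (k + j) * (-c) ^ (k + j))
        = (-1 : ℝ) ^ j * t (k + j) := by
      intro j
      rw [neg_pow, pow_add, ht_def]
      simp only
      linear_combination (b (k + j) * c ^ (k + j) * (-1 : ℝ) ^ j) * hsq k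
    have hA : ∀ j ∈ Finset.range k, (-1 : ℝ) ^ k * (b j * (-c) ^ j)
        = -((-1 : ℝ) ^ (k - 1 - j) * t j) := by
      intro j hj
      simp only [Finset.mem_range] at hj
      have hk' : k = j + (k - 1 - j) + 1 := by omega
      rw [neg_pow, ht_def]
      simp only
      rw [show ((-1:ℝ))^k = ((-1:ℝ))^(j + (k - 1 - j) + 1) by rw [← hk']]
      rw [pow_add, pow_add, pow_one]
      linear_combination (-(b j * c ^ j * (-1 : ℝ) ^ (k - 1 - j))) * hsq j
    rw [Finset.sum_congr rfl hA, Finset.sum_congr rfl (fun j _ => hB j)]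
    rw [Finset.sum_neg_distrib]
    rw [show (∑ j ∈ Finset.range k, (-1 : ℝ) ^ (k - 1 - j) * t j)
        = ∑ j ∈ Finset.range k, (-1 : ℝ) ^ j * t (k - 1 - j) from ?_]
    · ring
    · rw [← Finset.sum_range_reflect]
      apply Finset.sum_congr rfl
      intro j hj
      simp only [Finset.mem_range] at hj
      congr 2 <;> omega
  -- bound the two pieces
  have hL := alt_sum_bounds k (fun j => t (k - 1 - j))
    (by
      intro j hj
      have e : k - 1 - j = (k - 1 - (j + 1)) + 1 := by omega
      rw [e]
      exact hlow _ (by omega))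
    (by
      intro j hj
      exact le_of_lt (htpos _ (by omega)))
  have hWsum : (∑ j ∈ Finset.range (n + 1 - k), (-1 : ℝ) ^ j * t (k + j))
      = t k - ∑ j ∈ Finset.range (n - k), (-1 : ℝ) ^ j * t (k + (j + 1)) := by
    rw [show n + 1 - k = (n - k) + 1 by omega, Finset.sum_range_succ']
    have h1 : ∀ j ∈ Finset.range (n - k),
        (-1 : ℝ) ^ (j + 1) * t (k + (j + 1)) = -((-1 : ℝ) ^ j * t (k + (j + 1))) := by
      intro j _; rw [pow_succ]; ring
    rw [Finset.sum_congr rfl h1, Finset.sum_neg_distrib]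
    simp
    ring
  have hW := alt_sum_bounds (n - k) (fun j => t (k + (j + 1)))
    (by
      intro j hj
      exact hup (k + (j + 1)) (by omega) (by omega))
    (by
      intro j hj
      exact le_of_lt (htpos _ (by omega)))
  rw [hsplit, hWsum]
  have htk : 0 < t k := htpos k hkn
  obtain ⟨hL0, hL1⟩ := hL
  obtain ⟨hW0, hW1⟩ := hW
  rw [if_neg (by omega)] at hL1
  simp only [Nat.sub_zero] at hL1
  rw [heq] at hL1
  have hW1' : (∑ j ∈ Finset.range (n - k), (-1 : ℝ) ^ j * t (k + (j + 1))) < t k / 2 := by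
    rcases Nat.eq_or_lt_of_le hkn with hke | hklt
    · have h0 : n - k = 0 := by omega
      rw [h0]
      simp
      linarith
    · rw [if_neg (by omega)] at hW1
      simp only [Nat.zero_add] at hW1
      have h6 := hstrict hklt
      linarith
  linarith

/-- Kurtz's theorem: a real polynomial of degree `n ≥ 1` with positive
coefficients satisfying `b_i^2 > 4 b_{i-1} b_{i+1}` for `1 ≤ i ≤ n-1`
has `n` distinct real roots (hence all roots are real and distinct). -/
theorem kurtz_real_roots (n : ℕ) (hn : 1 ≤ n) (P : Polynomial ℝ)
    (hdeg : P.natDegree = n)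
    (hpos : ∀ i ≤ n, 0 < P.coeff i)
    (hineq : ∀ i, 1 ≤ i → i ≤ n - 1 →
      4 * P.coeff (i - 1) * P.coeff (i + 1) < (P.coeff i) ^ 2) :
    ∃ s : Finset ℝ, s.card = n ∧ ∀ x ∈ s, P.IsRoot x := by
  set b : ℕ → ℝ := fun i => P.coeff i with hb_def
  have hbpos : ∀ i ≤ n, 0 < b i := hpos
  have hstep : ∀ i, 1 ≤ i → i < n → 4 * (b (i - 1) / b i) < b i / b (i + 1) := by
    intro i hi1 hin
    have h := hineq i hi1 (by omega)
    have h1 : 0 < b i := hbpos i (by omega)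
    have h2 : 0 < b (i + 1) := hbpos (i + 1) (by omega)
    rw [← mul_div_assoc, div_lt_div_iff₀ h1 h2]
    nlinarith [h]
  -- the test points
  set x : ℕ → ℝ := fun k => if k = 0 then 0 else -(2 * (b (k - 1) / b k)) with hx_def
  have hsign : ∀ k ≤ n, 0 < (-1 : ℝ) ^ k * P.eval (x k) := by
    intro k hk
    rcases Nat.eq_zero_or_pos k with h0 | h1
    · subst h0
      simp only [hx_def, if_pos rfl, pow_zero, one_mul]
      rw [← Polynomial.coeff_zero_eq_eval_zero]
      exact hpos 0 (by omega)
    · have hx : x k = -(2 * (b (k - 1) / b k)) := by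
        rw [hx_def]; simp only [if_neg (by omega : ¬ k = 0)]
      rw [hx, Polynomial.eval_eq_sum_range, hdeg]
      exact kurtz_sign n b hbpos hstep k h1 hk
  have hxlt : ∀ k, k < n → x (k + 1) < x k := by
    intro k hk
    rcases Nat.eq_zero_or_pos k with h0 | h1
    · subst h0
      have h1 : 0 < b 0 := hbpos 0 (by omega)
      have h2 : 0 < b 1 := hbpos 1 (by omega)
      simp only [hx_def, if_pos rfl, if_neg (by omega : ¬ (0:ℕ) + 1 = 0)]
      have h3 : 0 < b (0 + 1 - 1) / b (0 + 1) := div_pos (by simpa using h1) (by simpa using h2)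
      have : (0:ℝ) < 2 * (b (0 + 1 - 1) / b (0 + 1)) := by linarith
      linarith
    · have hs := hstep k h1 hk
      have hr : 0 < b (k - 1) / b k := div_pos (hbpos _ (by omega)) (hbpos _ (by omega))
      simp only [hx_def, if_neg (by omega : ¬ k + 1 = 0), if_neg (by omega : ¬ k = 0),
        Nat.add_sub_cancel]
      have : b (k - 1) / b k < b k / b (k + 1) := by linarith
      linarith
  have hxle : ∀ j, j ≤ n → ∀ i, i ≤ j → x j ≤ x i := by
    intro j
    induction j with
    | zero =>
      intro _ i hi
      have : i = 0 := by omega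
      rw [this]
    | succ j ih =>
      intro hjn i hij
      rcases Nat.eq_or_lt_of_le hij with h | h
      · rw [h]
      · have h1 : x (j + 1) ≤ x j := le_of_lt (hxlt j (by omega))
        have h2 : x j ≤ x i := ih (by omega) i (by omega)
        linarith
  -- roots between consecutive test points
  have hroot : ∀ k, k < n → ∃ y, x (k + 1) < y ∧ y < x k ∧ P.eval y = 0 := by
    intro k hk
    have h1 := hsign k (by omega)
    have h2 := hsign (k + 1) (by omega)
    have hlt := hxlt k hk
    have hcont : ContinuousOn (fun y => P.eval y) (Set.Icc (x (k + 1)) (x k)) :=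
      (Polynomial.continuous P).continuousOn
    rcases Nat.even_or_odd k with he | ho
    · have hk1 : 0 < P.eval (x k) := by
        rw [he.neg_one_pow, one_mul] at h1; exact h1
      have hk2 : P.eval (x (k + 1)) < 0 := by
        have hodd : Odd (k + 1) := Even.add_one he
        rw [hodd.neg_one_pow] at h2; linarith
      obtain ⟨y, hy, hy0⟩ := intermediate_value_Ioo (le_of_lt hlt) hcont ⟨hk2, hk1⟩
      exact ⟨y, hy.1, hy.2, hy0⟩
    · have hk1 : P.eval (x k) < 0 := by
        rw [ho.neg_one_pow] at h1; linarith
      have hk2 : 0 < P.eval (x (k + 1)) := by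
        have heven : Even (k + 1) := Odd.add_one ho
        rw [heven.neg_one_pow, one_mul] at h2; exact h2
      obtain ⟨y, hy, hy0⟩ := intermediate_value_Ioo' (le_of_lt hlt) hcont ⟨hk1, hk2⟩
      exact ⟨y, hy.1, hy.2, hy0⟩
  have hroot' : ∀ k, ∃ y, k < n → x (k + 1) < y ∧ y < x k ∧ P.eval y = 0 := by
    intro k
    by_cases h : k < n
    · obtain ⟨y, h1, h2, h3⟩ := hroot k h
      exact ⟨y, fun _ => ⟨h1, h2, h3⟩⟩
    · exact ⟨0, fun hk => absurd hk h⟩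
  choose y hy using hroot'
  have hylt : ∀ k l, k < l → l < n → y l < y k := by
    intro k l hkl hln
    obtain ⟨ha1, ha2, _⟩ := hy l hln
    obtain ⟨hb1, hb2, _⟩ := hy k (by omega)
    have hxll : x l ≤ x (k + 1) := hxle l (by omega) (k + 1) (by omega)
    linarith
  refine ⟨(Finset.range n).image y, ?_, ?_⟩
  · rw [Finset.card_image_of_injOn, Finset.card_range]
    intro a ha b' hb' hab
    simp only [Finset.coe_range, Set.mem_Iio] at ha hb'
    by_contra hne
    rcases lt_trichotomy a b' with h | h | h
    · exact absurd hab (ne_of_gt (hylt a b' h hb'))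
    · exact hne h
    · exact absurd hab (ne_of_lt (hylt b' a h ha))
  · intro z hz
    simp only [Finset.mem_image, Finset.mem_range] at hz
    obtain ⟨k, hk, rfl⟩ := hz
    exact (hy k hk).2.2
end

section
/- For every 0 < p \le 1/4 and k \ge 2, the polynomial f_{p,k}(x) = \sum_{j=0}^k \frac{p^{\binom{j}{2}}}{j!} x^j has k distinct real roots, all of which are negative. -/
/-- Coefficient of the truncated deformed exponential. -/
noncomputable def dea (p : ℝ) (j : ℕ) : ℝ := p ^ (j.choose 2) / (j.factorial : ℝ)

/-- Ratio of consecutive coefficients: `dea p (j-1) / dea p j = j / p^(j-1)`. -/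
noncomputable def deb (p : ℝ) (j : ℕ) : ℝ := (j : ℝ) / p ^ (j - 1)

lemma dea_pos {p : ℝ} (hp : 0 < p) (j : ℕ) : 0 < dea p j := by
  unfold dea
  positivity

lemma deb_nonneg {p : ℝ} (hp : 0 < p) (j : ℕ) : 0 ≤ deb p j := by
  unfold deb
  positivity

lemma dea_rel {p : ℝ} (hp : 0 < p) (j : ℕ) :
    dea p j = deb p (j + 1) * dea p (j + 1) := by
  unfold dea deb
  have h1 : (j + 1).choose 2 = j.choose 2 + j := by
    rw [Nat.choose_succ_succ]
    simp [Nat.choose_one_right, Nat.add_comm]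
  have h2 : ((j + 1).factorial : ℝ) = (j + 1) * (j.factorial : ℝ) := by
    rw [Nat.factorial_succ]; push_cast; ring
  rw [h1, h2, pow_add]
  have hpj : (p : ℝ) ^ j ≠ 0 := pow_ne_zero _ hp.ne'
  have hf : (j.factorial : ℝ) ≠ 0 := Nat.cast_ne_zero.mpr j.factorial_ne_zero
  have hj1 : ((j : ℝ) + 1) ≠ 0 := by positivity
  simp only [Nat.add_sub_cancel]
  push_cast
  field_simp

lemma four_deb_lt {p : ℝ} (hp : 0 < p) (hp4 : p ≤ 1 / 4) (m : ℕ) :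
    4 * deb p m < deb p (m + 1) := by
  unfold deb
  rcases Nat.eq_zero_or_pos m with rfl | hm
  · simp
  · have hppow : 0 < p ^ (m - 1) := pow_pos hp _
    have hppow' : 0 < p ^ m := pow_pos hp _
    have hpm : p ^ m = p ^ (m - 1) * p := by
      rw [← pow_succ]; congr 1; omega
    rw [Nat.add_sub_cancel]
    have hrw : (4 : ℝ) * ((m : ℝ) / p ^ (m - 1)) = (4 * m) / p ^ (m - 1) := by ring
    rw [hrw, div_lt_div_iff₀ hppow hppow', hpm]
    have hmr : (1 : ℝ) ≤ (m : ℝ) := by exact_mod_cast hm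
    push_cast
    have h4mp : 4 * (m : ℝ) * p ≤ (m : ℝ) := by nlinarith
    nlinarith [mul_le_mul_of_nonneg_right h4mp hppow.le, hppow]

lemma deb_strictMono {p : ℝ} (hp : 0 < p) (hp4 : p ≤ 1 / 4) :
    StrictMono (deb p) := by
  apply strictMono_nat_of_lt_succ
  intro n
  have h := four_deb_lt hp hp4 n
  have h0 := deb_nonneg hp n
  linarith

lemma deb_pos {p : ℝ} (hp : 0 < p) (hp4 : p ≤ 1 / 4) (m : ℕ) (hm : 1 ≤ m) :
    0 < deb p m := by
  have := (deb_strictMono hp hp4).monotone hm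
  have h0 : deb p 0 = 0 := by unfold deb; simp
  have h1 : 0 < deb p 1 := by
    unfold deb; simp
  linarith

/-- Alternating sum of an antitone nonnegative sequence lies in `[0, g 0]`. -/
lemma altLow (n : ℕ) : ∀ (g : ℕ → ℝ), (∀ i, 0 ≤ g i) → (∀ i, g (i + 1) ≤ g i) →
    0 ≤ ∑ i ∈ Finset.range n, (-1 : ℝ) ^ i * g i ∧
      ∑ i ∈ Finset.range n, (-1 : ℝ) ^ i * g i ≤ g 0 := by
  induction n with
  | zero => intro g h0 hm; simp [h0 0]
  | succ n ih =>
    intro g h0 hm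
    obtain ⟨ih1, ih2⟩ := ih (fun i => g (i + 1)) (fun i => h0 _) (fun i => hm _)
    rw [Finset.sum_range_succ']
    have hterm : ∀ i ∈ Finset.range n, (-1 : ℝ) ^ (i + 1) * g (i + 1)
        = -((-1 : ℝ) ^ i * g (i + 1)) := by
      intro i _; rw [pow_succ]; ring
    rw [Finset.sum_congr rfl hterm, Finset.sum_neg_distrib]
    have hg1 : g 1 ≤ g 0 := hm 0
    constructor
    · simp only [pow_zero, one_mul]
      linarith
    · simp only [pow_zero, one_mul]
      linarith

/-- The "reflected" alternating sum `∑_{j<m} (-1)^(m+j) A j` lies in `[-A (m-1), 0]`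
for a sequence increasing below `m`. -/
lemma lowQ (A : ℕ → ℝ) (h0 : ∀ i, 0 ≤ A i) :
    ∀ m : ℕ, (∀ i, i + 1 < m → A i ≤ A (i + 1)) →
    -A (m - 1) ≤ ∑ j ∈ Finset.range m, (-1 : ℝ) ^ (m + j) * A j ∧
      ∑ j ∈ Finset.range m, (-1 : ℝ) ^ (m + j) * A j ≤ 0 := by
  intro m
  induction m with
  | zero => intro _; simp [h0 0]
  | succ m ih =>
    intro hm
    obtain ⟨ih1, ih2⟩ := ih (fun i hi => hm i (by omega))
    rw [Finset.sum_range_succ]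
    have key : ∑ j ∈ Finset.range m, (-1 : ℝ) ^ (m + 1 + j) * A j
        = -∑ j ∈ Finset.range m, (-1 : ℝ) ^ (m + j) * A j := by
      rw [← Finset.sum_neg_distrib]
      apply Finset.sum_congr rfl
      intro j _
      have he : m + 1 + j = (m + j) + 1 := by omega
      rw [he, pow_succ]; ring
    have hlast : (-1 : ℝ) ^ (m + 1 + m) * A m = -A m := by
      have : Odd (m + 1 + m) := ⟨m, by omega⟩
      rw [this.neg_one_pow]; ring
    rw [key, hlast]
    have hAm : A (m - 1) ≤ A m := by
      rcases Nat.eq_zero_or_pos m with rfl | hmpos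
      · simp
      · have h := hm (m - 1) (by omega)
        have he : m - 1 + 1 = m := by omega
        rwa [he] at h
    simp only [Nat.add_sub_cancel]
    constructor <;> linarith

/-- Main sign lemma: at a point `-s` with `2 b_m < s` and `2 s < b_{m+1}`, the truncated
deformed exponential has sign `(-1)^m`. -/
lemma sign_at {p : ℝ} (hp : 0 < p) (hp4 : p ≤ 1 / 4) (k m : ℕ) (hm : m ≤ k)
    (s : ℝ) (hs0 : 0 < s) (h1 : 2 * deb p m < s) (h2 : 2 * s < deb p (m + 1)) :
    0 < (-1 : ℝ) ^ m * ∑ j ∈ Finset.range (k + 1), dea p j * (-s) ^ j := by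
  set A : ℕ → ℝ := fun j => dea p j * s ^ j with hA
  have hAdef : ∀ j, A j = dea p j * s ^ j := fun j => rfl
  have hA0 : ∀ j, 0 < A j := fun j => mul_pos (dea_pos hp j) (pow_pos hs0 j)
  -- rewrite the sum
  have hterm : ∀ j, dea p j * (-s) ^ j = (-1 : ℝ) ^ j * A j := by
    intro j
    rw [hAdef, neg_pow]
    ring
  have hsum : (-1 : ℝ) ^ m * ∑ j ∈ Finset.range (k + 1), dea p j * (-s) ^ j
      = ∑ j ∈ Finset.range (k + 1), (-1 : ℝ) ^ (m + j) * A j := by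
    rw [Finset.mul_sum]
    apply Finset.sum_congr rfl
    intro j _
    rw [hterm j, pow_add]
    ring
  rw [hsum]
  have hsplit : k + 1 = (m + 1) + (k - m) := by omega
  rw [hsplit, Finset.sum_range_add, Finset.sum_range_succ]
  -- middle term
  have hmid : (-1 : ℝ) ^ (m + m) * A m = A m := by
    have : Even (m + m) := ⟨m, rfl⟩
    rw [this.neg_one_pow, one_mul]
  rw [hmid]
  -- upper sum
  have hup_term : ∀ i ∈ Finset.range (k - m),
      (-1 : ℝ) ^ (m + (m + 1 + i)) * A (m + 1 + i) = -((-1 : ℝ) ^ i * A (m + 1 + i)) := by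
    intro i _
    have he : m + (m + 1 + i) = 2 * m + (i + 1) := by omega
    rw [he, pow_add, pow_mul]
    norm_num
    rw [pow_succ]
    ring
  rw [Finset.sum_congr rfl hup_term, Finset.sum_neg_distrib]
  -- bounds
  have hdebmono := (deb_strictMono hp hp4).monotone
  have hslt : s < deb p (m + 1) := by
    have := deb_pos hp hp4 (m + 1) (by omega)
    linarith
  -- lower part monotone
  have hlowmono : ∀ i, i + 1 < m → A i ≤ A (i + 1) := by
    intro i hi
    have hb : deb p (i + 1) ≤ deb p m := hdebmono (by omega)
    have hbs : deb p (i + 1) ≤ s := by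
      have := deb_nonneg hp m
      linarith
    calc A i = deb p (i + 1) * (dea p (i + 1) * s ^ i) := by
          rw [hAdef, dea_rel hp i]; ring
      _ ≤ s * (dea p (i + 1) * s ^ i) := by
          apply mul_le_mul_of_nonneg_right hbs
          exact (mul_pos (dea_pos hp _) (pow_pos hs0 _)).le
      _ = A (i + 1) := by rw [hAdef, pow_succ]; ring
  -- upper part antitone
  have hupanti : ∀ i, A (m + 1 + i + 1) ≤ A (m + 1 + i) := by
    intro i
    have hb : deb p (m + 1) ≤ deb p (m + 1 + i + 1) := hdebmono (by omega)
    have hbs : s ≤ deb p (m + 1 + i + 1) := by linarith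
    calc A (m + 1 + i + 1) = s * (dea p (m + 1 + i + 1) * s ^ (m + 1 + i)) := by
          rw [hAdef, pow_succ]; ring
      _ ≤ deb p (m + 1 + i + 1) * (dea p (m + 1 + i + 1) * s ^ (m + 1 + i)) := by
          apply mul_le_mul_of_nonneg_right hbs
          exact (mul_pos (dea_pos hp _) (pow_pos hs0 _)).le
      _ = A (m + 1 + i) := by
          rw [hAdef, dea_rel hp (m + 1 + i)]; ring
  obtain ⟨hT1, hT2⟩ := lowQ A (fun i => (hA0 i).le) m hlowmono
  obtain ⟨hU1, hU2⟩ := altLow (k - m) (fun i => A (m + 1 + i)) (fun i => (hA0 _).le)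
    (fun i => hupanti i)
  -- strict bound on A (m+1)
  have hupstrict : 2 * A (m + 1) < A m := by
    have hpos : 0 < dea p (m + 1) * s ^ m := mul_pos (dea_pos hp _) (pow_pos hs0 _)
    calc 2 * A (m + 1) = (2 * s) * (dea p (m + 1) * s ^ m) := by
          rw [hAdef, pow_succ]; ring
      _ < deb p (m + 1) * (dea p (m + 1) * s ^ m) := by
          exact mul_lt_mul_of_pos_right h2 hpos
      _ = A m := by rw [hAdef, dea_rel hp m]; ring
  rcases Nat.eq_zero_or_pos m with rfl | hmpos
  · -- m = 0 : lower sum is empty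
    simp only [Finset.range_zero, Finset.sum_empty, zero_add]
    have : A 1 < A 0 := by simp only [zero_add] at hupstrict; linarith [hA0 1]
    linarith
  · -- m ≥ 1
    have hlowstrict : 2 * A (m - 1) < A m := by
      obtain ⟨n, rfl⟩ : ∃ n, m = n + 1 := ⟨m - 1, by omega⟩
      simp only [Nat.add_sub_cancel]
      have hpos : 0 < dea p (n + 1) * s ^ n := mul_pos (dea_pos hp _) (pow_pos hs0 _)
      calc 2 * A n = (2 * deb p (n + 1)) * (dea p (n + 1) * s ^ n) := by
            rw [hAdef, dea_rel hp n]; ring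
        _ < s * (dea p (n + 1) * s ^ n) := mul_lt_mul_of_pos_right h1 hpos
        _ = A (n + 1) := by rw [hAdef, pow_succ]; ring
    linarith

/-- For `0 < p ≤ 1/4` and `k ≥ 2`, the truncated deformed exponential
`f_{p,k}(x) = ∑_{j=0}^k p^(C(j,2))/j! · x^j` has `k` distinct real roots,
all of which are negative. -/
theorem truncated_deformed_exp_roots (p : ℝ) (hp : 0 < p) (hp4 : p ≤ 1 / 4)
    (k : ℕ) (hk : 2 ≤ k) :
    ∃ s : Finset ℝ, s.card = k ∧ ∀ x ∈ s, x < 0 ∧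
      ∑ j ∈ Finset.range (k + 1), p ^ (j.choose 2) / (j.factorial : ℝ) * x ^ j = 0 := by
  set f : ℝ → ℝ := fun x => ∑ j ∈ Finset.range (k + 1), dea p j * x ^ j with hf
  have hfeq : ∀ x, f x = ∑ j ∈ Finset.range (k + 1),
      p ^ (j.choose 2) / (j.factorial : ℝ) * x ^ j := by
    intro x; rw [hf]; rfl
  set sfun : ℕ → ℝ := fun m => deb p m + deb p (m + 1) / 4 with hsfun
  have hsmono : StrictMono sfun := by
    intro a b hab
    have h1 := deb_strictMono hp hp4 hab
    have h2 := deb_strictMono hp hp4 (by omega : a + 1 < b + 1)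
    simp only [hsfun]
    linarith
  have hspos : ∀ m, 0 < sfun m := by
    intro m
    have h1 := deb_nonneg hp m
    have h2 := deb_pos hp hp4 (m + 1) (by omega)
    simp only [hsfun]
    linarith
  have hsign : ∀ m, m ≤ k → 0 < (-1 : ℝ) ^ m * f (-(sfun m)) := by
    intro m hmk
    apply sign_at hp hp4 k m hmk (sfun m) (hspos m)
    · have h4 := four_deb_lt hp hp4 m
      simp only [hsfun]
      linarith
    · have h4 := four_deb_lt hp hp4 m
      have h0 := deb_nonneg hp m
      simp only [hsfun]
      linarith
  have hcont : Continuous f := by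
    apply continuous_finset_sum
    intro j _
    exact continuous_const.mul (continuous_pow j)
  have hroot : ∀ m : ℕ, ∃ x : ℝ, m < k →
      x ∈ Set.Ioo (-(sfun (m + 1))) (-(sfun m)) ∧ f x = 0 := by
    intro m
    by_cases hmk : m < k
    · have h1 := hsign m hmk.le
      have h2 := hsign (m + 1) hmk
      have hab : -(sfun (m + 1)) ≤ -(sfun m) := by
        have := hsmono (lt_add_one m); linarith
      rcases Nat.even_or_odd m with he | ho
      · have hodd : Odd (m + 1) := Even.add_one he
        rw [he.neg_one_pow, one_mul] at h1
        rw [hodd.neg_one_pow] at h2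
        have hfa : f (-(sfun (m + 1))) < 0 := by linarith
        obtain ⟨x, hx, hfx⟩ := intermediate_value_Ioo hab (hcont.continuousOn)
          (Set.mem_Ioo.mpr ⟨hfa, h1⟩)
        exact ⟨x, fun _ => ⟨hx, hfx⟩⟩
      · have heven : Even (m + 1) := Odd.add_one ho
        rw [ho.neg_one_pow] at h1
        rw [heven.neg_one_pow, one_mul] at h2
        have hfb : f (-(sfun m)) < 0 := by linarith
        obtain ⟨x, hx, hfx⟩ := intermediate_value_Ioo' hab (hcont.continuousOn)
          (Set.mem_Ioo.mpr ⟨hfb, h2⟩)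
        exact ⟨x, fun _ => ⟨hx, hfx⟩⟩
    · exact ⟨0, fun h => absurd h hmk⟩
  choose r hr using hroot
  have hrdec : ∀ m₁ m₂, m₁ < m₂ → m₂ < k → r m₂ < r m₁ := by
    intro m₁ m₂ h12 h2k
    have hA := (hr m₁ (by omega)).1
    have hB := (hr m₂ h2k).1
    have hs12 : sfun (m₁ + 1) ≤ sfun m₂ := hsmono.monotone (by omega)
    have := hA.1
    have := hB.2
    linarith
  refine ⟨(Finset.range k).image r, ?_, ?_⟩
  · rw [Finset.card_image_of_injOn, Finset.card_range]
    intro a ha b hb hab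
    simp only [Finset.mem_coe, Finset.mem_range] at ha hb
    by_contra hne
    rcases Nat.lt_or_ge a b with h | h
    · have := hrdec a b h hb; linarith [hab.le]
    · have hba : b < a := by omega
      have := hrdec b a hba ha
      linarith [hab.ge]
  · intro x hx
    simp only [Finset.mem_image, Finset.mem_range] at hx
    obtain ⟨m, hmk, rfl⟩ := hx
    obtain ⟨hmem, hzero⟩ := hr m hmk
    constructor
    · have := hmem.2
      have := hspos m
      linarith
    · rw [← hfeq]; exact hzero
end

section
/- For every k \ge 2 and 0 < p \le 1/4 there exist nonnegative reals c_1, \dots, c_k with: (i) for all 1 \le j \le k, the j-th elementary symmetric polynomial e_j(c_1,\dots,c_k) = p^{\binom{j}{2}}/j!, and (ii) \max_i c_i \ge 3/4. -/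
open Polynomial Finset

namespace EGW

noncomputable def aa (p : ℝ) (j : ℕ) : ℝ := p ^ (j.choose 2) / (j.factorial : ℝ)

lemma aa_pos {p : ℝ} (hp : 0 < p) (j : ℕ) : 0 < aa p j := by
  unfold aa; positivity

lemma aa_zero (p : ℝ) : aa p 0 = 1 := by simp [aa]

lemma aa_one (p : ℝ) : aa p 1 = 1 := by norm_num [aa]

lemma aa_two (p : ℝ) : aa p 2 = p / 2 := by
  norm_num [aa, Nat.factorial]

lemma aa_succ (p : ℝ) (m : ℕ) :
    aa p (m + 1) = aa p m * p ^ m / (m + 1) := by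
  unfold aa
  rw [show (m + 1).choose 2 = m.choose 2 + m by
        rw [Nat.choose_succ_succ, Nat.choose_one_right, Nat.add_comm],
      Nat.factorial_succ, pow_add]
  have h1 : ((m : ℝ) + 1) ≠ 0 := by positivity
  have h2 : ((m.factorial : ℝ)) ≠ 0 := by
    exact_mod_cast m.factorial_ne_zero
  push_cast
  rw [div_mul_eq_mul_div, div_div]
  ring_nf

lemma alt_sum_bounds (g : ℕ → ℝ) (hg : ∀ i, 0 ≤ g i) :
    ∀ (l m : ℕ), (∀ i, m ≤ i → g (i + 1) ≤ g i) →
      0 ≤ (-1 : ℝ) ^ m * ∑ i ∈ Finset.Ico m (m + l), (-1 : ℝ) ^ i * g i ∧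
        (-1 : ℝ) ^ m * ∑ i ∈ Finset.Ico m (m + l), (-1 : ℝ) ^ i * g i ≤ g m := by
  intro l
  induction l with
  | zero => intro m _; simp [hg m]
  | succ l ih =>
    intro m hmono
    rw [show m + (l + 1) = (m + 1) + l by omega,
        Finset.sum_eq_sum_Ico_succ_bot (by omega : m < m + 1 + l)]
    obtain ⟨h1, h2⟩ := ih (m + 1) (fun i hi => hmono i (by omega))
    set S := ∑ i ∈ Finset.Ico (m + 1) (m + 1 + l), (-1 : ℝ) ^ i * g i with hS
    have hsq : (-1 : ℝ) ^ m * (-1 : ℝ) ^ m = 1 := by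
      rw [← pow_add, ← two_mul, pow_mul]; norm_num
    have key : (-1 : ℝ) ^ m * ((-1 : ℝ) ^ m * g m + S)
        = g m - (-1 : ℝ) ^ (m + 1) * S := by
      rw [pow_succ, mul_add, ← mul_assoc, hsq]; ring
    rw [key]
    have hgm := hmono m le_rfl
    constructor <;> linarith

lemma ratio_lemma (p : ℝ) (X : ℝ) (i : ℕ) :
    aa p (i + 1) * X ^ (i + 1) * ((i : ℝ) + 1) = (aa p i * X ^ i) * (X * p ^ i) := by
  rw [aa_succ]
  have h1 : ((i : ℝ) + 1) ≠ 0 := by positivity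
  field_simp
  ring

/-- Abstract core of the sign alternation argument. -/
lemma sign_core (k m : ℕ) (g : ℕ → ℝ) (hgpos : ∀ i, 0 < g i)
    (hincr : ∀ i, i + 1 ≤ m + 1 → g i ≤ g (i + 1))
    (hdecr : ∀ i, m + 2 ≤ i → g (i + 1) ≤ g i)
    (hc1 : g m = g (m + 1) / 2)
    (hc2 : g (m + 2) < g (m + 1) / 2)
    (hmk : m + 1 ≤ k) :
    0 < (-1 : ℝ) ^ (m + 1) * ∑ i ∈ Finset.range (k + 1), (-1 : ℝ) ^ i * g i := by
  have hg0 : ∀ i, 0 ≤ g i := fun i => (hgpos i).le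
  have e1 : ∑ i ∈ Finset.range (k + 1), (-1 : ℝ) ^ i * g i
      = (∑ i ∈ Finset.range (m + 1), (-1 : ℝ) ^ i * g i)
        + ((-1 : ℝ) ^ (m + 1) * g (m + 1)
          + ∑ i ∈ Finset.Ico (m + 2) (k + 1), (-1 : ℝ) ^ i * g i) := by
    rw [Finset.range_eq_Ico,
        ← Finset.sum_Ico_consecutive _ (Nat.zero_le (m + 1)) (by omega : m + 1 ≤ k + 1),
        Finset.sum_eq_sum_Ico_succ_bot (by omega : m + 1 < k + 1), ← Finset.range_eq_Ico]
  have e3 : ∑ i ∈ Finset.range (m + 1), (-1 : ℝ) ^ i * g i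
      = (-1 : ℝ) ^ m * ∑ d ∈ Finset.range (m + 1), (-1 : ℝ) ^ d * g (m - d) := by
    rw [← Finset.sum_range_reflect (fun i => (-1 : ℝ) ^ i * g i) (m + 1), Finset.mul_sum]
    refine Finset.sum_congr rfl fun d hd => ?_
    simp only [Finset.mem_range] at hd
    have h1 : m + 1 - 1 - d = m - d := by omega
    simp only [h1]
    have h4 : (-1 : ℝ) ^ m * (-1 : ℝ) ^ d = (-1 : ℝ) ^ (m - d) := by
      rw [← pow_add, show m + d = (m - d) + 2 * d by omega, pow_add, pow_mul]
      norm_num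
    rw [← h4]; ring
  -- bounds for the reflected lower sum
  have hTmono : ∀ d : ℕ, 0 ≤ d → g (m - (d + 1)) ≤ g (m - d) := by
    intro d _
    by_cases hc : d + 1 ≤ m
    · have h2 : m - d = (m - (d + 1)) + 1 := by omega
      rw [h2]
      exact hincr _ (by omega)
    · have h2 : m - (d + 1) = m - d := by omega
      rw [h2]
  have hTb := alt_sum_bounds (fun d => g (m - d)) (fun d => hg0 _) (m + 1) 0
      (fun i _ => hTmono i (Nat.zero_le i))
  simp only [pow_zero, one_mul, Nat.zero_add, Nat.sub_zero] at hTb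
  rw [show Finset.Ico 0 (m + 1) = Finset.range (m + 1) from by rw [Finset.range_eq_Ico]] at hTb
  -- bounds for the upper sum
  have hHb := alt_sum_bounds g hg0 (k + 1 - (m + 2)) (m + 2) (fun i hi => hdecr i hi)
  rw [show m + 2 + (k + 1 - (m + 2)) = k + 1 by omega] at hHb
  have hpow2 : (-1 : ℝ) ^ (m + 2) = (-1 : ℝ) ^ m := by
    rw [pow_add]; norm_num
  rw [hpow2] at hHb
  rw [e1, e3]
  set T := ∑ d ∈ Finset.range (m + 1), (-1 : ℝ) ^ d * g (m - d) with hT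
  set H := ∑ i ∈ Finset.Ico (m + 2) (k + 1), (-1 : ℝ) ^ i * g i with hH
  have hq : (-1 : ℝ) ^ m * (-1 : ℝ) ^ m = 1 := by
    rw [← pow_add, ← two_mul, pow_mul]; norm_num
  have hpow1 : (-1 : ℝ) ^ (m + 1) = -(-1 : ℝ) ^ m := by rw [pow_succ]; ring
  rw [hpow1]
  have key : (-(-1 : ℝ) ^ m) * ((-1 : ℝ) ^ m * T + ((-(-1 : ℝ) ^ m) * g (m + 1) + H))
      = -T + g (m + 1) - (-1 : ℝ) ^ m * H := by
    linear_combination (g (m + 1) - T) * hq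
  rw [key]
  obtain ⟨hT0, hT1⟩ := hTb
  obtain ⟨hH0, hH1⟩ := hHb
  linarith

lemma sign_at (k : ℕ) {p : ℝ} (hp : 0 < p) (hp4 : p ≤ 1 / 4) {j : ℕ}
    (hj1 : 1 ≤ j) (hjk : j ≤ k) :
    0 < (-1 : ℝ) ^ j *
      ∑ i ∈ Finset.range (k + 1),
        (-1 : ℝ) ^ i * (aa p i * (2 * j / p ^ (j - 1)) ^ i) := by
  have hp1 : p ≤ 1 := by linarith
  have hjR : (1 : ℝ) ≤ (j : ℝ) := by exact_mod_cast hj1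
  have hX0 : 0 < 2 * (j : ℝ) / p ^ (j - 1) := by
    apply div_pos (by linarith) (pow_pos hp _)
  set X : ℝ := 2 * j / p ^ (j - 1) with hXdef
  set g : ℕ → ℝ := fun i => aa p i * X ^ i with hgdef
  have hgpos : ∀ i, 0 < g i := fun i => mul_pos (aa_pos hp i) (pow_pos hX0 i)
  have hg0 : ∀ i, 0 ≤ g i := fun i => (hgpos i).le
  have hratio : ∀ i, g (i + 1) * ((i : ℝ) + 1) = g i * (X * p ^ i) :=
    fun i => ratio_lemma p X i
  have hXpj : X * p ^ (j - 1) = 2 * j := by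
    rw [hXdef]; field_simp
  have hincr : ∀ i, i + 1 ≤ j → g i ≤ g (i + 1) := by
    intro i hi
    have hpow : p ^ (j - 1) ≤ p ^ i :=
      pow_le_pow_of_le_one hp.le hp1 (by omega)
    have hiR : (i : ℝ) + 1 ≤ (j : ℝ) := by exact_mod_cast hi
    have hx : ((i : ℝ) + 1) ≤ X * p ^ i := by
      have h1 : X * p ^ (j - 1) ≤ X * p ^ i :=
        mul_le_mul_of_nonneg_left hpow hX0.le
      rw [hXpj] at h1
      linarith
    have h2 : g i * ((i : ℝ) + 1) ≤ g i * (X * p ^ i) :=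
      mul_le_mul_of_nonneg_left hx (hg0 i)
    rw [← hratio i] at h2
    exact le_of_mul_le_mul_right h2 (by positivity)
  have hdecr : ∀ i, j + 1 ≤ i → g (i + 1) ≤ g i := by
    intro i hi
    have hsplit : p ^ i = p ^ (j - 1) * p ^ (i - j + 1) := by
      rw [← pow_add]; congr 1; omega
    have hp2 : p ^ (i - j + 1) ≤ p ^ 2 :=
      pow_le_pow_of_le_one hp.le hp1 (by omega)
    have hp214 : p ^ 2 ≤ (1 / 4 : ℝ) ^ 2 := by nlinarith
    have hjiR : (j : ℝ) ≤ (i : ℝ) := by exact_mod_cast (by omega : j ≤ i)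
    have hx : X * p ^ i ≤ ((i : ℝ) + 1) := by
      have he : X * p ^ i = 2 * j * p ^ (i - j + 1) := by
        rw [hsplit, ← mul_assoc, hXpj]
      rw [he]
      nlinarith [pow_nonneg hp.le (i - j + 1)]
    have h2 : g i * (X * p ^ i) ≤ g i * ((i : ℝ) + 1) :=
      mul_le_mul_of_nonneg_left hx (hg0 i)
    rw [← hratio i] at h2
    exact le_of_mul_le_mul_right h2 (by positivity)
  obtain ⟨m, rfl⟩ : ∃ m, j = m + 1 := ⟨j - 1, by omega⟩
  have hm1 : m + 1 - 1 = m := by omega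
  rw [hm1] at hXdef hXpj
  have hc1 : g m = g (m + 1) / 2 := by
    have h := hratio m
    rw [hXpj] at h
    push_cast at h
    have h2 : g m * 2 * ((m : ℝ) + 1) = g (m + 1) * ((m : ℝ) + 1) := by
      rw [mul_assoc]; exact h.symm
    have h3 := mul_right_cancel₀ (show ((m : ℝ) + 1) ≠ 0 by positivity) h2
    linarith
  have hc2 : g (m + 2) < g (m + 1) / 2 := by
    have h := hratio (m + 1)
    have hXp1 : X * p ^ (m + 1) = 2 * ((m : ℝ) + 1) * p := by
      rw [pow_succ, ← mul_assoc, hXpj]; push_cast; ring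
    rw [hXp1] at h
    push_cast at h
    have hmul : (0 : ℝ) ≤ ((m : ℝ) + 1) * (1 / 4 - p) := by
      apply mul_nonneg (by positivity) (by linarith)
    have hlt : g (m + 1 + 1) * ((m : ℝ) + 1 + 1) < g (m + 1) / 2 * ((m : ℝ) + 1 + 1) := by
      nlinarith [hgpos (m + 1)]
    exact lt_of_mul_lt_mul_right hlt (by positivity)
  have := sign_core k m g hgpos hincr (fun i hi => hdecr i (by omega)) hc1 hc2 hjk
  exact this

lemma eval_neg_43 (k : ℕ) (hk : 2 ≤ k) {p : ℝ} (hp : 0 < p) (hp4 : p ≤ 1 / 4) :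
    ∑ i ∈ Finset.range (k + 1), (-1 : ℝ) ^ i * (aa p i * (4 / 3 : ℝ) ^ i) < 0 := by
  have hp1 : p ≤ 1 := by linarith
  set g : ℕ → ℝ := fun i => aa p i * (4 / 3 : ℝ) ^ i with hgdef
  have hgpos : ∀ i, 0 < g i :=
    fun i => mul_pos (aa_pos hp i) (by positivity)
  have hg0 : ∀ i, 0 ≤ g i := fun i => (hgpos i).le
  have hratio : ∀ i, g (i + 1) * ((i : ℝ) + 1) = g i * ((4 / 3 : ℝ) * p ^ i) :=
    fun i => ratio_lemma p (4 / 3 : ℝ) i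
  have hdecr : ∀ i, 1 ≤ i → g (i + 1) ≤ g i := by
    intro i hi
    have hiR : (1 : ℝ) ≤ (i : ℝ) := by exact_mod_cast hi
    have hpi : p ^ i ≤ 1 := pow_le_one₀ hp.le hp1
    have hx : (4 / 3 : ℝ) * p ^ i ≤ ((i : ℝ) + 1) := by nlinarith
    have h2 : g i * ((4 / 3 : ℝ) * p ^ i) ≤ g i * ((i : ℝ) + 1) :=
      mul_le_mul_of_nonneg_left hx (hg0 i)
    rw [← hratio i] at h2
    exact le_of_mul_le_mul_right h2 (by positivity)
  have e1 : ∑ i ∈ Finset.range (k + 1), (-1 : ℝ) ^ i * g i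
      = ((-1 : ℝ) ^ 0 * g 0 + (-1 : ℝ) ^ 1 * g 1)
        + ∑ i ∈ Finset.Ico 2 (k + 1), (-1 : ℝ) ^ i * g i := by
    rw [Finset.range_eq_Ico,
        ← Finset.sum_Ico_consecutive _ (Nat.zero_le 2) (by omega : 2 ≤ k + 1)]
    congr 1
    rw [show Finset.Ico 0 2 = Finset.range 2 from by rw [Finset.range_eq_Ico],
        Finset.sum_range_succ, Finset.sum_range_one]
  have hHb := alt_sum_bounds g hg0 (k + 1 - 2) 2 (fun i hi => hdecr i (by omega))
  rw [show 2 + (k + 1 - 2) = k + 1 by omega] at hHb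
  have hpow2 : (-1 : ℝ) ^ 2 = (1 : ℝ) := by norm_num
  rw [hpow2, one_mul] at hHb
  have hg0v : g 0 = 1 := by rw [hgdef]; simp [aa_zero]
  have hg1v : g 1 = 4 / 3 := by
    show aa p 1 * (4 / 3 : ℝ) ^ 1 = 4 / 3
    rw [aa_one]; norm_num
  have hg2v : g 2 ≤ 2 / 9 := by
    have : g 2 = aa p 2 * (4 / 3 : ℝ) ^ 2 := rfl
    rw [this, aa_two]
    nlinarith
  rw [e1]
  obtain ⟨hH0, hH1⟩ := hHb
  rw [hg0v, hg1v] at *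
  norm_num
  linarith

end EGW

open EGW

/-- For every `k ≥ 2` and `0 < p ≤ 1/4` there exist nonnegative reals
`c_1, …, c_k` whose `j`-th elementary symmetric polynomial equals
`p^(C(j,2))/j!` for `1 ≤ j ≤ k`, and with `max c_i ≥ 3/4`. -/
theorem exists_good_weights (k : ℕ) (hk : 2 ≤ k) (p : ℝ) (hp : 0 < p)
    (hp4 : p ≤ 1 / 4) :
    ∃ c : Fin k → ℝ, (∀ i, 0 ≤ c i) ∧
      (∀ j, 1 ≤ j → j ≤ k →
        ∑ A ∈ Finset.powersetCard j (Finset.univ : Finset (Fin k)), ∏ i ∈ A, c i =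
          p ^ (j.choose 2) / (j.factorial : ℝ)) ∧
      ∃ i, 3 / 4 ≤ c i := by
  classical
  set f : Polynomial ℝ := ∑ i ∈ Finset.range (k + 1), Polynomial.C (aa p i) * Polynomial.X ^ i
    with hfdef
  have hcoeff : ∀ m : ℕ, f.coeff m = if m ∈ Finset.range (k + 1) then aa p m else 0 := by
    intro m
    rw [hfdef, Polynomial.finset_sum_coeff]
    simp only [Polynomial.coeff_C_mul, Polynomial.coeff_X_pow, mul_ite, mul_one, mul_zero]
    exact Finset.sum_ite_eq (Finset.range (k + 1)) m (fun i => aa p i)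
  have heval : ∀ x : ℝ, f.eval x = ∑ i ∈ Finset.range (k + 1), aa p i * x ^ i := by
    intro x
    rw [hfdef, Polynomial.eval_finset_sum]
    simp
  -- the sign points
  set z : ℕ → ℝ := fun n =>
    if n = 0 then 0 else if n = 1 then -(4 / 3) else -(2 * n / p ^ (n - 1)) with hzdef
  have hz0 : z 0 = 0 := by simp [hzdef]
  have hz1 : z 1 = -(4 / 3) := by simp [hzdef]
  have hz2 : ∀ n : ℕ, 2 ≤ n → z n = -(2 * n / p ^ (n - 1)) := by
    intro n hn
    have h0 : n ≠ 0 := by omega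
    have h1 : n ≠ 1 := by omega
    simp [hzdef, h0, h1]
  have hsign : ∀ j : ℕ, j ≤ k → 0 < (-1 : ℝ) ^ j * f.eval (z j) := by
    intro j hj
    match j with
    | 0 =>
      rw [hz0, pow_zero, one_mul, ← Polynomial.coeff_zero_eq_eval_zero, hcoeff]
      simp [aa_zero]
    | 1 =>
      rw [hz1, heval]
      have he : ∑ i ∈ Finset.range (k + 1), aa p i * (-(4 / 3 : ℝ)) ^ i
          = ∑ i ∈ Finset.range (k + 1), (-1 : ℝ) ^ i * (aa p i * (4 / 3 : ℝ) ^ i) := by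
        refine Finset.sum_congr rfl fun i _ => ?_
        rw [neg_pow]; ring
      rw [he, pow_one]
      have := eval_neg_43 k hk hp hp4
      linarith
    | (n + 2) =>
      rw [hz2 (n + 2) (by omega), heval]
      have he : ∑ i ∈ Finset.range (k + 1), aa p i * (-(2 * ((n + 2 : ℕ) : ℝ) / p ^ (n + 2 - 1))) ^ i
          = ∑ i ∈ Finset.range (k + 1),
              (-1 : ℝ) ^ i * (aa p i * (2 * ((n + 2 : ℕ) : ℝ) / p ^ (n + 2 - 1)) ^ i) := by
        refine Finset.sum_congr rfl fun i _ => ?_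
        rw [neg_pow]; ring
      rw [he]
      exact sign_at k hp hp4 (by omega) hj
  have hz_dec : ∀ n : ℕ, n + 1 ≤ k → z (n + 1) < z n := by
    intro n _
    match n with
    | 0 => rw [hz0, hz1]; norm_num
    | 1 =>
      rw [hz1, hz2 2 le_rfl]
      have h43 : (4 / 3 : ℝ) < 2 * ((2 : ℕ) : ℝ) / p ^ (2 - 1) := by
        rw [show ((2 : ℕ) : ℝ) = 2 by norm_num, pow_one, lt_div_iff₀ hp]
        nlinarith
      linarith
    | (n + 2) =>
      rw [hz2 (n + 2) (by omega), hz2 (n + 3) (by omega)]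
      have hpp : 0 < p ^ (n + 1) := pow_pos hp _
      have hq : 2 * ((n + 2 : ℕ) : ℝ) / p ^ (n + 2 - 1) < 2 * ((n + 3 : ℕ) : ℝ) / p ^ (n + 3 - 1) := by
        rw [show n + 2 - 1 = n + 1 from rfl, show n + 3 - 1 = n + 2 from rfl]
        rw [div_lt_div_iff₀ (pow_pos hp _) (pow_pos hp _)]
        push_cast
        rw [pow_succ]
        have hstep : 2 * ((n : ℝ) + 2) * p ≤ ((n : ℝ) + 2) / 2 := by
          nlinarith [(show (0 : ℝ) ≤ (n : ℝ) + 2 by positivity)]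
        calc 2 * ((n : ℝ) + 2) * (p ^ (n + 1) * p) = (2 * ((n : ℝ) + 2) * p) * p ^ (n + 1) := by
              ring
        _ ≤ (((n : ℝ) + 2) / 2) * p ^ (n + 1) := mul_le_mul_of_nonneg_right hstep hpp.le
        _ < 2 * ((n : ℝ) + 3) * p ^ (n + 1) := by nlinarith [hpp]
      linarith
  have hz_le : ∀ m n : ℕ, m ≤ n → n ≤ k → z n ≤ z m := by
    intro m n hmn hnk
    induction n with
    | zero =>
      obtain rfl : m = 0 := by omega
      exact le_rfl
    | succ n ih =>
      rcases Nat.lt_or_ge m (n + 1) with h | h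
      · exact le_trans (le_of_lt (hz_dec n hnk)) (ih (by omega) (by omega))
      · obtain rfl : m = n + 1 := by omega
        exact le_rfl
  -- roots via IVT
  have hroot : ∀ j : Fin k, ∃ x, z (j.val + 1) < x ∧ x < z j.val ∧ f.eval x = 0 := by
    intro j
    have hjk : j.val + 1 ≤ k := j.isLt
    have hdec := hz_dec j.val hjk
    have s0 := hsign j.val (by omega)
    have s1 := hsign (j.val + 1) hjk
    rcases Nat.even_or_odd j.val with he | ho
    · have h0 : 0 < f.eval (z j.val) := by rwa [he.neg_one_pow, one_mul] at s0
      have h1 : f.eval (z (j.val + 1)) < 0 := by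
        have ho1 : Odd (j.val + 1) := Even.add_one he
        rw [ho1.neg_one_pow] at s1
        linarith
      have hsub := intermediate_value_Ioo (le_of_lt hdec) (f.continuousOn)
      obtain ⟨x, hx, hfx⟩ := hsub ⟨h1, h0⟩
      exact ⟨x, hx.1, hx.2, hfx⟩
    · have h0 : f.eval (z j.val) < 0 := by
        rw [ho.neg_one_pow] at s0
        linarith
      have h1 : 0 < f.eval (z (j.val + 1)) := by
        have he1 : Even (j.val + 1) := Odd.add_one ho
        rwa [he1.neg_one_pow, one_mul] at s1
      have hsub := intermediate_value_Ioo' (le_of_lt hdec) (f.continuousOn)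
      obtain ⟨x, hx, hfx⟩ := hsub ⟨h0, h1⟩
      exact ⟨x, hx.1, hx.2, hfx⟩
  choose r hr1 hr2 hr3 using hroot
  have hrneg : ∀ i : Fin k, r i < 0 := by
    intro i
    have h1 := hr2 i
    have h2 : z i.val ≤ z 0 := hz_le 0 i.val (Nat.zero_le _) (by omega)
    rw [hz0] at h2
    linarith
  have hranti : ∀ i i' : Fin k, i < i' → r i' < r i := by
    intro i i' h
    have hlt : i.val + 1 ≤ i'.val := h
    have h2 : z i'.val ≤ z (i.val + 1) := hz_le _ _ hlt (by omega)
    have h3 := hr1 i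
    have h4 := hr2 i'
    linarith
  have hrinj : Function.Injective r := by
    intro x y hxy
    rcases lt_trichotomy x y with h | h | h
    · have := hranti x y h; rw [hxy] at this; exact absurd this (lt_irrefl _)
    · exact h
    · have := hranti y x h; rw [hxy] at this; exact absurd this (lt_irrefl _)
  -- factorization
  set g0 : Polynomial ℝ := ∏ i : Fin k, (Polynomial.X - Polynomial.C (r i)) with hg0def
  have hg0monic : g0.Monic :=
    Polynomial.monic_prod_of_monic _ _ (fun i _ => Polynomial.monic_X_sub_C (r i))
  have hg0deg : g0.natDegree = k := by
    rw [hg0def, Polynomial.natDegree_prod_of_monic _ _ (fun i _ => Polynomial.monic_X_sub_C _)]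
    simp [Polynomial.natDegree_X_sub_C, Finset.card_univ]
  have hakpos : 0 < aa p k := aa_pos hp k
  set h : Polynomial ℝ := f - Polynomial.C (aa p k) * g0 with hhdef
  have hhk : h.coeff k = 0 := by
    rw [hhdef, Polynomial.coeff_sub, Polynomial.coeff_C_mul, hcoeff]
    have : g0.coeff k = 1 := by
      have := hg0monic.coeff_natDegree
      rwa [hg0deg] at this
    rw [this]
    simp
  have hfnd : f.natDegree ≤ k := by
    apply Polynomial.natDegree_le_iff_coeff_eq_zero.mpr
    intro N hN
    rw [hcoeff]
    simp only [Finset.mem_range, ite_eq_right_iff]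
    intro hNk
    omega
  have hhnd : h.natDegree ≤ k := by
    refine le_trans (Polynomial.natDegree_sub_le _ _) (max_le hfnd ?_)
    refine le_trans (Polynomial.natDegree_mul_le) ?_
    rw [Polynomial.natDegree_C, hg0deg]
    omega
  have hheval : ∀ i : Fin k, h.eval (r i) = 0 := by
    intro i
    rw [hhdef, Polynomial.eval_sub, Polynomial.eval_mul, Polynomial.eval_C, hr3 i, hg0def,
        Polynomial.eval_prod]
    rw [Finset.prod_eq_zero (Finset.mem_univ i) (by simp)]
    ring
  have hh0 : h = 0 := by
    by_cases hc : h = 0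
    · exact hc
    · exfalso
      have hne : h.natDegree ≠ k := by
        intro he
        apply hc
        apply Polynomial.leadingCoeff_eq_zero.mp
        rw [Polynomial.leadingCoeff, he]
        exact hhk
      have hlt : h.natDegree < k := lt_of_le_of_ne hhnd hne
      exact hc (Polynomial.eq_zero_of_natDegree_lt_card_of_eval_eq_zero h hrinj hheval
        (by rwa [Fintype.card_fin]))
  have hfeq : f = Polynomial.C (aa p k) * g0 := sub_eq_zero.mp hh0
  -- Vieta
  have hcardu : (Finset.univ : Finset (Fin k)).card = k := by
    rw [Finset.card_univ, Fintype.card_fin]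
  have key : ∀ j : ℕ, j ≤ k →
      aa p j = aa p k * ∑ t ∈ Finset.powersetCard (k - j) (Finset.univ : Finset (Fin k)),
        ∏ i ∈ t, (-r i) := by
    intro j hj
    have h1 : f.coeff j = aa p j := by
      rw [hcoeff]
      simp only [Finset.mem_range, if_pos (by omega : j < k + 1)]
    have h2 : g0 = ∏ i : Fin k, (Polynomial.X + Polynomial.C (-(r i))) := by
      rw [hg0def]
      refine Finset.prod_congr rfl fun i _ => ?_
      rw [map_neg, sub_eq_add_neg]
    rw [hfeq, Polynomial.coeff_C_mul, h2,
        Finset.prod_X_add_C_coeff Finset.univ (fun i => -(r i)) (by rw [hcardu]; exact hj),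
        hcardu] at h1
    exact h1.symm
  set P : ℝ := ∏ i : Fin k, (-r i) with hPdef
  have hPpos : 0 < P := by
    rw [hPdef]
    exact Finset.prod_pos (fun i _ => by have := hrneg i; linarith)
  have hP1 : aa p k * P = 1 := by
    have h0 := key 0 (Nat.zero_le k)
    rw [aa_zero, Nat.sub_zero] at h0
    rw [show Finset.powersetCard k (Finset.univ : Finset (Fin k)) = {Finset.univ} from by
          have hps := Finset.powersetCard_self (Finset.univ : Finset (Fin k))
          rwa [hcardu] at hps] at h0
    rw [Finset.sum_singleton] at h0
    exact h0.symm
  -- the weights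
  refine ⟨fun i => (-r i)⁻¹, ?_, ?_, ?_⟩
  · intro i
    have h2 : 0 < -r i := by linarith [hrneg i]
    positivity
  · intro j hj1 hjk
    have hkey := key j hjk
    have step1 : ∀ A ∈ Finset.powersetCard j (Finset.univ : Finset (Fin k)),
        ∏ i ∈ A, (-r i)⁻¹ = (∏ i ∈ Aᶜ, (-r i)) / P := by
      intro A _
      have hcompl : (∏ i ∈ A, (-r i)) * ∏ i ∈ Aᶜ, (-r i) = P :=
        Finset.prod_mul_prod_compl A _
      have hApos : 0 < ∏ i ∈ A, (-r i) :=
        Finset.prod_pos (fun i _ => by have := hrneg i; linarith)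
      rw [Finset.prod_inv_distrib, eq_div_iff (ne_of_gt hPpos), inv_mul_eq_iff_eq_mul₀ (ne_of_gt hApos)]
      rw [← hcompl]
    rw [Finset.sum_congr rfl step1, ← Finset.sum_div]
    have hbij : ∑ A ∈ Finset.powersetCard j (Finset.univ : Finset (Fin k)), ∏ i ∈ Aᶜ, (-r i)
        = ∑ B ∈ Finset.powersetCard (k - j) (Finset.univ : Finset (Fin k)), ∏ i ∈ B, (-r i) := by
      refine Finset.sum_nbij' (fun A => Aᶜ) (fun B => Bᶜ) ?_ ?_ ?_ ?_ ?_
      · intro A hA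
        rw [Finset.mem_powersetCard_univ] at hA ⊢
        rw [Finset.card_compl, Fintype.card_fin, hA]
      · intro B hB
        rw [Finset.mem_powersetCard_univ] at hB ⊢
        rw [Finset.card_compl, Fintype.card_fin, hB]
        omega
      · intro A _; exact compl_compl A
      · intro B _; exact compl_compl B
      · intro A _; rfl
    rw [hbij]
    show (∑ B ∈ Finset.powersetCard (k - j) (Finset.univ : Finset (Fin k)), ∏ i ∈ B, (-r i)) / P
        = aa p j
    set S : ℝ := ∑ B ∈ Finset.powersetCard (k - j) (Finset.univ : Finset (Fin k)), ∏ i ∈ B, (-r i)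
      with hSdef
    rw [div_eq_iff (ne_of_gt hPpos)]
    linear_combination (-P) * hkey + (-S) * hP1
  · refine ⟨⟨0, by omega⟩, ?_⟩
    have h1 : z 1 < r ⟨0, by omega⟩ := hr1 ⟨0, by omega⟩
    have h2 := hrneg ⟨0, by omega⟩
    rw [hz1] at h1
    have h3 : 0 < -r ⟨0, by omega⟩ := by linarith
    have h4 : -r ⟨0, by omega⟩ ≤ 4 / 3 := by linarith
    calc (3 / 4 : ℝ) = (4 / 3 : ℝ)⁻¹ := by norm_num
    _ ≤ (-r ⟨0, by omega⟩)⁻¹ := inv_anti₀ h3 h4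
end
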